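/- For an odd integer m ≥ 3 and g(x) = Σ_{k=(m+1)/2}^{m} C(m,k) x^k (1−x)^{m−k}, the second derivative satisfies g''(x) = ((m+1)/2)((m−1)/2) C(m,(m−1)/2) (x(1−x))^{(m−3)/2} (1−2x). Consequently g is strictly convex on (0,1/2) and strictly concave on (1/2,1). -/

import Mathlib

/-- The majority polynomial: probability that `Bin(m,x) ≥ (m+1)/2`. -/
noncomputable def majPoly (m : ℕ) (x : ℝ) : ℝ :=
  ∑ k ∈ Finset.Icc ((m + 1) / 2) m, (m.choose k : ℝ) * x ^ k * (1 - x) ^ (m - k)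

private lemma term_hasDerivAt (m k : ℕ) (x : ℝ) :
    HasDerivAt (fun x : ℝ => (m.choose k : ℝ) * x ^ k * (1 - x) ^ (m - k))
      ((m.choose k : ℝ) * k * x ^ (k - 1) * (1 - x) ^ (m - k)
        - (m.choose (k + 1) : ℝ) * ((k : ℝ) + 1) * x ^ k * (1 - x) ^ (m - (k + 1))) x := by
  have h1 : HasDerivAt (fun y : ℝ => (m.choose k : ℝ) * y ^ k)
      ((m.choose k : ℝ) * ((k : ℝ) * x ^ (k - 1))) x := (hasDerivAt_pow k x).const_mul _
  have h2 : HasDerivAt (fun y : ℝ => (1 - y) ^ (m - k))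
      (((m - k : ℕ) : ℝ) * (1 - x) ^ (m - k - 1) * (-1)) x :=
    ((hasDerivAt_id x).const_sub 1).pow _
  have h := h1.mul h2
  convert h using 1
  case e'_4 => rfl
  case e'_5 => rfl
  case e'_8 => rfl
  have hc : (m.choose (k + 1) : ℝ) * ((k : ℝ) + 1)
      = (m.choose k : ℝ) * ((m - k : ℕ) : ℝ) := by
    exact_mod_cast congrArg (Nat.cast (R := ℝ)) (Nat.choose_succ_right_eq m k)
  have hmk : m - (k + 1) = m - k - 1 := by omega
  rw [hmk]
  linear_combination (- x ^ k * (1 - x) ^ (m - k - 1)) * hc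

private lemma telescope (A : ℕ → ℝ) (a n : ℕ) :
    ∑ k ∈ Finset.Icc a (a + n), (A k - A (k + 1)) = A a - A (a + n + 1) := by
  induction n with
  | zero => simp
  | succ n ih =>
      rw [show a + (n + 1) = a + n + 1 from rfl, Finset.sum_Icc_succ_top (by omega), ih]
      ring

private lemma majPoly_hasDerivAt (t : ℕ) (x : ℝ) :
    HasDerivAt (majPoly (2 * t + 1))
      (((t : ℝ) + 1) * ((2 * t + 1).choose (t + 1) : ℝ) * (x ^ t * (1 - x) ^ t)) x := by
  have hlo : (2 * t + 1 + 1) / 2 = t + 1 := by omega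
  have hmaj : majPoly (2 * t + 1) = fun x : ℝ =>
      ∑ k ∈ Finset.Icc (t + 1) (2 * t + 1),
        ((2 * t + 1).choose k : ℝ) * x ^ k * (1 - x) ^ (2 * t + 1 - k) := by
    unfold majPoly
    rw [hlo]
  rw [hmaj]
  have hsum : HasDerivAt (fun x : ℝ => ∑ k ∈ Finset.Icc (t + 1) (2 * t + 1),
        ((2 * t + 1).choose k : ℝ) * x ^ k * (1 - x) ^ (2 * t + 1 - k))
      (∑ k ∈ Finset.Icc (t + 1) (2 * t + 1),
        ((fun j => ((2 * t + 1).choose j : ℝ) * j * x ^ (j - 1) * (1 - x) ^ (2 * t + 1 - j)) k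
          - (fun j => ((2 * t + 1).choose j : ℝ) * j * x ^ (j - 1) * (1 - x) ^ (2 * t + 1 - j))
              (k + 1))) x := by
    apply HasDerivAt.fun_sum
    intro k hk
    have h := term_hasDerivAt (2 * t + 1) k x
    convert h using 1
    case e'_4 => rfl
    case e'_5 => rfl
    simp only [Nat.add_sub_cancel]
    push_cast
    ring
  have htel := telescope
    (fun j => ((2 * t + 1).choose j : ℝ) * j * x ^ (j - 1) * (1 - x) ^ (2 * t + 1 - j)) (t + 1) t
  rw [show t + 1 + t = 2 * t + 1 from by omega] at htel
  rw [htel] at hsum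
  convert hsum using 1
  simp only [Nat.add_sub_cancel, Nat.choose_succ_self,
    show 2 * t + 1 - (t + 1) = t from by omega]
  push_cast
  ring

private lemma majPoly_deriv2 (t : ℕ) (ht : 1 ≤ t) (x : ℝ) :
    deriv (deriv (majPoly (2 * t + 1))) x
      = ((t : ℝ) + 1) * (t : ℝ) * ((2 * t + 1).choose t : ℝ) * (x * (1 - x)) ^ (t - 1)
          * (1 - 2 * x) := by
  have hd1 : deriv (majPoly (2 * t + 1))
      = fun x : ℝ => ((t : ℝ) + 1) * ((2 * t + 1).choose (t + 1) : ℝ) * (x ^ t * (1 - x) ^ t) :=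
    funext fun y => (majPoly_hasDerivAt t y).deriv
  rw [hd1]
  have h2 : HasDerivAt (fun x : ℝ =>
      ((t : ℝ) + 1) * ((2 * t + 1).choose (t + 1) : ℝ) * (x ^ t * (1 - x) ^ t))
      (((t : ℝ) + 1) * ((2 * t + 1).choose (t + 1) : ℝ) *
        (((t : ℝ) * x ^ (t - 1)) * (1 - x) ^ t
          + x ^ t * ((t : ℝ) * (1 - x) ^ (t - 1) * (-1)))) x :=
    ((hasDerivAt_pow t x).mul (((hasDerivAt_id x).const_sub 1).pow t)).const_mul _
  rw [h2.deriv]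
  have hsymm : (2 * t + 1).choose (t + 1) = (2 * t + 1).choose t := by
    rw [← Nat.choose_symm (by omega : t ≤ 2 * t + 1)]
    congr 1
    omega
  rw [hsymm, mul_pow]
  obtain ⟨s, rfl⟩ : ∃ s, t = s + 1 := ⟨t - 1, by omega⟩
  simp only [Nat.add_sub_cancel]
  push_cast
  ring

theorem majPoly_second_deriv (m : ℕ) (hm : Odd m) (hm3 : 3 ≤ m) :
    (∀ x ∈ Set.Icc (0:ℝ) 1,
      deriv (deriv (majPoly m)) x
        = ((m + 1 : ℝ) / 2) * ((m - 1 : ℝ) / 2) * (m.choose ((m - 1) / 2) : ℝ)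
            * (x * (1 - x)) ^ ((m - 3) / 2) * (1 - 2 * x)) ∧
    StrictConvexOn ℝ (Set.Ioo (0:ℝ) (1/2)) (majPoly m) ∧
    StrictConcaveOn ℝ (Set.Ioo (1/2 : ℝ) 1) (majPoly m) := by
  obtain ⟨t, ht⟩ := hm
  have hmt : m = 2 * t + 1 := by omega
  subst hmt
  have ht1 : 1 ≤ t := by omega
  have key : ∀ x : ℝ, deriv (deriv (majPoly (2 * t + 1))) x
      = ((t : ℝ) + 1) * (t : ℝ) * ((2 * t + 1).choose t : ℝ) * (x * (1 - x)) ^ (t - 1)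
          * (1 - 2 * x) := majPoly_deriv2 t ht1
  have hC : (0 : ℝ) < ((2 * t + 1).choose t : ℝ) := by
    exact_mod_cast Nat.choose_pos (by omega : t ≤ 2 * t + 1)
  have htR : (0 : ℝ) < (t : ℝ) := by exact_mod_cast ht1
  have hcont : Continuous (majPoly (2 * t + 1)) := by
    unfold majPoly
    exact continuous_finset_sum _ fun k _ => by fun_prop
  refine ⟨?_, ?_, ?_⟩
  · intro x _
    rw [key x]
    have h1 : (2 * t + 1 - 1) / 2 = t := by omega
    have h2 : (2 * t + 1 - 3) / 2 = t - 1 := by omega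
    rw [h1, h2]
    push_cast
    ring
  · apply strictConvexOn_of_deriv2_pos (convex_Ioo 0 (1/2)) hcont.continuousOn
    intro x hx
    rw [interior_Ioo] at hx
    show (0 : ℝ) < deriv (deriv (majPoly (2 * t + 1))) x
    rw [key x]
    have hx1 : 0 < x := hx.1
    have hx2 : x < 1 / 2 := hx.2
    have hlin : 0 < 1 - 2 * x := by linarith
    have hxx : 0 < x * (1 - x) := by nlinarith
    exact mul_pos (mul_pos (mul_pos (mul_pos (by positivity) htR) hC) (pow_pos hxx _)) hlin
  · apply strictConcaveOn_of_deriv2_neg (convex_Ioo (1/2 : ℝ) 1) hcont.continuousOn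
    intro x hx
    rw [interior_Ioo] at hx
    show deriv (deriv (majPoly (2 * t + 1))) x < 0
    rw [key x]
    have hx1 : 1 / 2 < x := hx.1
    have hx2 : x < 1 := hx.2
    have hlin : 1 - 2 * x < 0 := by linarith
    have hxx : 0 < x * (1 - x) := by nlinarith
    exact mul_neg_of_pos_of_neg
      (mul_pos (mul_pos (mul_pos (by positivity) htR) hC) (pow_pos hxx _)) hlin
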